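/- For the correction factor c_{p,n} = ((n-1)/2 · B(1/2,(n-1)/2) · √(1 - p^{-2/(n-1)}))^{2/(n-1)}, the following hold uniformly over integers n ≥ 2 as p → ∞: (i) c_{p,n}/(((n-1)/2)B(1/2,(n-1)/2))^{2/(n-1)} → 1; (ii) b_{p,n} = (2/(n-1))p^{-2/(n-1)}c_{p,n} → 0; (iii) a_{p,n}/(1 - p^{-2/(n-1)}) → 1 where a_{p,n} = 1 - p^{-2/(n-1)}c_{p,n}; (iv) b_{p,n}/a_{p,n} → 0. -/

import Mathlib

open MeasureTheory ProbabilityTheory Real Set Filter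

/-- The real Beta function. -/
noncomputable def betaFun (a b : ℝ) : ℝ := Real.Gamma a * Real.Gamma b / Real.Gamma (a + b)

/-- The Beta(a,b) distribution on ℝ. -/
noncomputable def betaMeasure (a b : ℝ) : Measure ℝ :=
  ((volume : Measure ℝ).restrict (Set.Ioo 0 1)).withDensity
    fun x => ENNReal.ofReal (x ^ (a - 1) * (1 - x) ^ (b - 1) / betaFun a b)

/-- The correction factor `c_{p,n}`. -/
noncomputable def cCorr (p n : ℕ) : ℝ :=
  ((((n:ℝ) - 1)/2) * betaFun (1/2) (((n:ℝ) - 1)/2) *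
      Real.sqrt (1 - (p:ℝ) ^ (-2/((n:ℝ) - 1)))) ^ (2/((n:ℝ) - 1))

/-- The centering constant `a_{p,n}`. -/
noncomputable def aConst (p n : ℕ) : ℝ := 1 - (p:ℝ) ^ (-2/((n:ℝ) - 1)) * cCorr p n

/-- The scaling constant `b_{p,n}`. -/
noncomputable def bConst (p n : ℕ) : ℝ :=
  (2/((n:ℝ) - 1)) * (p:ℝ) ^ (-2/((n:ℝ) - 1)) * cCorr p n

section Aux

private lemma abs_exp_sub_one_le' (u : ℝ) : |Real.exp u - 1| ≤ |u| * Real.exp |u| := by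
  rcases le_or_gt 0 u with h | h
  · rw [abs_of_nonneg h, abs_of_nonneg (by linarith [Real.one_le_exp h] : (0:ℝ) ≤ Real.exp u - 1)]
    have h2 : 1 - u ≤ Real.exp (-u) := by linarith [Real.add_one_le_exp (-u)]
    have h3 : Real.exp (-u) * Real.exp u = 1 := by rw [← Real.exp_add]; simp
    nlinarith [Real.exp_pos u]
  · have h1 : Real.exp u < 1 := Real.exp_lt_one_iff.mpr h
    rw [abs_of_neg h, abs_of_neg (by linarith : Real.exp u - 1 < 0)]
    have h2 : u + 1 ≤ Real.exp u := Real.add_one_le_exp u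
    nlinarith [Real.exp_pos (-u), Real.one_le_exp (le_of_lt (neg_pos.mpr h))]

private lemma one_sub_exp_neg_pos' {x : ℝ} (hx : 0 < x) : 0 < 1 - Real.exp (-x) := by
  have := Real.exp_lt_one_iff.mpr (neg_neg_iff_pos.mpr hx)
  linarith

private lemma mul_exp_neg_le_one_sub' {x : ℝ} (hx : 0 < x) :
    x * Real.exp (-x) ≤ 1 - Real.exp (-x) := by
  have h := Real.add_one_le_exp x
  have h3 : Real.exp (-x) * Real.exp x = 1 := by rw [← Real.exp_add]; simp
  nlinarith [Real.exp_pos (-x)]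

private lemma one_sub_exp_neg_le' {x : ℝ} (hx : 0 < x) : 1 - Real.exp (-x) ≤ x := by
  linarith [Real.add_one_le_exp (-x)]

private lemma x_mul_neg_log' (x : ℝ) (hx : 0 < x) :
    x * (-Real.log (1 - Real.exp (-x))) ≤ 1 := by
  have h0 := one_sub_exp_neg_pos' hx
  have h1 : -Real.log (1 - Real.exp (-x)) ≤ Real.exp (-x)/(1 - Real.exp (-x)) := by
    have := Real.log_le_sub_one_of_pos (x := (1 - Real.exp (-x))⁻¹) (by positivity)
    rw [Real.log_inv] at this
    have h2 : (1 - Real.exp (-x))⁻¹ - 1 = Real.exp (-x)/(1 - Real.exp (-x)) := by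
      field_simp; ring
    linarith
  calc x * (-Real.log (1 - Real.exp (-x))) ≤ x * (Real.exp (-x)/(1 - Real.exp (-x))) :=
        mul_le_mul_of_nonneg_left h1 hx.le
    _ = x * Real.exp (-x) / (1 - Real.exp (-x)) := by ring
    _ ≤ 1 := (div_le_one h0).mpr (mul_exp_neg_le_one_sub' hx)

private lemma neg_log_one_sub_exp_nonneg' {x : ℝ} (hx : 0 < x) :
    Real.log (1 - Real.exp (-x)) ≤ 0 :=
  Real.log_nonpos (one_sub_exp_neg_pos' hx).le (by linarith [Real.exp_pos (-x)])

private lemma logK_bound (m : ℝ) (hm : 1/2 ≤ m) :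
    0 < m * betaFun (1/2) m ∧ |Real.log (m * betaFun (1/2) m) - Real.log m / 2| ≤ 1 := by
  have hm0 : 0 < m := by linarith
  have hG : ∀ y : ℝ, 0 < y → 0 < Real.Gamma y := fun y hy => Real.Gamma_pos_of_pos hy
  have hGm := hG m hm0
  have hGmh := hG (m + 1/2) (by linarith)
  have hB : betaFun (1/2) m = Real.sqrt π * Real.Gamma m / Real.Gamma (m + 1/2) := by
    rw [betaFun, Real.Gamma_one_half_eq, add_comm]
  have hKpos : 0 < m * betaFun (1/2) m := by
    rw [hB]; positivity
  refine ⟨hKpos, ?_⟩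
  have hconv := Real.convexOn_log_Gamma
  have hmid : ∀ a b : ℝ, 0 < a → 0 < b →
      Real.log (Real.Gamma ((a+b)/2)) ≤ (Real.log (Real.Gamma a) + Real.log (Real.Gamma b))/2 := by
    intro a b ha hb
    have := hconv.2 (Set.mem_Ioi.mpr ha) (Set.mem_Ioi.mpr hb)
      (by norm_num : (0:ℝ) ≤ 1/2) (by norm_num : (0:ℝ) ≤ 1/2) (by norm_num)
    simp only [Function.comp, smul_eq_mul] at this
    have he : 1/2*a + 1/2*b = (a+b)/2 := by ring
    rw [he] at this
    linarith
  have hL1 : Real.log (Real.Gamma (m + 1/2)) ≤ Real.log (Real.Gamma m) + Real.log m / 2 := by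
    have h := hmid m (m+1) hm0 (by linarith)
    have he : (m + (m+1))/2 = m + 1/2 := by ring
    rw [he] at h
    have hg1 : Real.Gamma (m+1) = m * Real.Gamma m := Real.Gamma_add_one (ne_of_gt hm0)
    rw [hg1, Real.log_mul (ne_of_gt hm0) (ne_of_gt hGm)] at h
    linarith
  have hL2 : Real.log (Real.Gamma m) ≤
      Real.log (Real.Gamma (m+1/2)) + Real.log (m+1/2)/2 - Real.log m := by
    have h := hmid (m+1/2) (m+3/2) (by linarith) (by linarith)
    have he : ((m+1/2) + (m+3/2))/2 = m + 1 := by ring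
    rw [he] at h
    have hg1 : Real.Gamma (m+1) = m * Real.Gamma m := Real.Gamma_add_one (ne_of_gt hm0)
    have hg2 : Real.Gamma (m+3/2) = (m+1/2) * Real.Gamma (m+1/2) := by
      rw [show m+3/2 = (m+1/2)+1 by ring]
      exact Real.Gamma_add_one (by positivity)
    rw [hg1, hg2, Real.log_mul (ne_of_gt hm0) (ne_of_gt hGm),
      Real.log_mul (by positivity) (ne_of_gt hGmh)] at h
    linarith
  have hlogK : Real.log (m * betaFun (1/2) m) =
      Real.log m + Real.log π / 2 + Real.log (Real.Gamma m) - Real.log (Real.Gamma (m+1/2)) := by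
    rw [hB]
    rw [show m * (Real.sqrt π * Real.Gamma m / Real.Gamma (m + 1/2)) =
      m * Real.sqrt π * Real.Gamma m / Real.Gamma (m + 1/2) by ring]
    rw [Real.log_div (by positivity) (ne_of_gt hGmh), Real.log_mul (by positivity) (ne_of_gt hGm),
      Real.log_mul (ne_of_gt hm0) (by positivity), Real.log_sqrt Real.pi_pos.le]
  have hup : Real.log (m * betaFun (1/2) m) - Real.log m / 2 ≤ 1 := by
    have h1 : Real.log (m+1/2) ≤ Real.log m + Real.log 2 := by
      rw [← Real.log_mul (ne_of_gt hm0) two_ne_zero]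
      exact Real.log_le_log (by linarith) (by linarith)
    have h2 : Real.log π + Real.log 2 ≤ 2 := by
      have hp : (π:ℝ) ≤ 3.15 := by linarith [Real.pi_lt_d2]
      have hlt : Real.log (π*2) ≤ 2 := by
        have hexp2 : (6.3:ℝ) ≤ Real.exp 2 := by
          have h9 := Real.exp_one_gt_d9
          have : Real.exp 2 = Real.exp 1 * Real.exp 1 := by rw [← Real.exp_add]; norm_num
          nlinarith
        calc Real.log (π*2) ≤ Real.log (Real.exp 2) :=
            Real.log_le_log (by positivity) (by nlinarith)
          _ = 2 := Real.log_exp 2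
      rw [← Real.log_mul (ne_of_gt Real.pi_pos) two_ne_zero]
      exact hlt
    linarith [hL1, hlogK]
  have hdown : -1 ≤ Real.log (m * betaFun (1/2) m) - Real.log m / 2 := by
    have hpi1 : 0 ≤ Real.log π := Real.log_nonneg (by linarith [Real.pi_gt_three])
    have h1 : Real.log m ≤ Real.log (m+1/2) := Real.log_le_log hm0 (by linarith)
    linarith [hL2, hlogK]
  rw [abs_le]; exact ⟨hdown, hup⟩

private lemma aux_linlog (A B D q : ℝ) (hB : 0 ≤ B) (hD : 0 < D) (hq1 : 1 ≤ q)
    (h1 : 2*A/D ≤ q) (h2 : (4*B/D)^2 ≤ q) : A + B * Real.log q ≤ D * q := by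
  have hq0 : (0:ℝ) < q := by linarith
  have hsq : Real.log q ≤ 2 * Real.sqrt q := by
    have h := Real.log_le_sub_one_of_pos (Real.sqrt_pos.mpr hq0)
    have h2' := Real.log_sqrt hq0.le
    nlinarith [Real.sqrt_nonneg q]
  have hA : A ≤ D*q/2 := by rw [div_le_iff₀ hD] at h1; linarith
  have hsq2 : 4*B/D ≤ Real.sqrt q := by
    have := Real.sqrt_le_sqrt h2
    rwa [Real.sqrt_sq (by positivity)] at this
  have hBq : B * Real.log q ≤ D*q/2 := by
    have hms : Real.sqrt q * Real.sqrt q = q := Real.mul_self_sqrt hq0.le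
    have h4 : 4*B ≤ D * Real.sqrt q := by rw [div_le_iff₀ hD] at hsq2; linarith
    nlinarith [Real.sqrt_nonneg q, Real.log_nonneg hq1]
  linarith

private lemma exp_three_le : Real.exp 3 ≤ 21 := by
  have h9 := Real.exp_one_lt_d9
  have h3 : Real.exp 3 = Real.exp 1 * Real.exp 1 * Real.exp 1 := by
    rw [← Real.exp_add, ← Real.exp_add]; norm_num
  nlinarith [Real.exp_pos 1]

end Aux

set_option maxHeartbeats 1000000

theorem constants_uniform_asymptotics :
    ∀ ε > 0, ∃ P : ℕ, ∀ p : ℕ, P ≤ p → ∀ n : ℕ, 2 ≤ n →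
      |cCorr p n / ((((n:ℝ) - 1)/2) * betaFun (1/2) (((n:ℝ) - 1)/2)) ^ (2/((n:ℝ) - 1)) - 1| < ε ∧
      |bConst p n| < ε ∧
      |aConst p n / (1 - (p:ℝ) ^ (-2/((n:ℝ) - 1))) - 1| < ε ∧
      |bConst p n / aConst p n| < ε := by
  intro ε hε
  set ε' : ℝ := min ε (1/2) with hε'def
  have hε'pos : 0 < ε' := lt_min hε (by norm_num)
  have hε'le : ε' ≤ ε := min_le_left _ _
  have hε'half : ε' ≤ 1/2 := min_le_right _ _
  set X : ℝ := Real.log (1 + 44/ε') with hXdef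
  have hX0 : 0 < X := Real.log_pos (lt_add_of_pos_right 1 (by positivity))
  have hEX : Real.exp X = 1 + 44/ε' := Real.exp_log (by positivity)
  set T : ℝ := max 1 (max (2/ε) (max (42/ε) (max (56/ε)
      (max (2*(X + X^2/2)/1) (max ((4*(X/2)/1)^2)
      (max (2*(Real.exp 1*(1+X/2))/(ε'/2)) ((4*(Real.exp 1/2)/(ε'/2))^2))))))) with hTdef
  clear_value ε' X
  refine ⟨max 3 ⌈Real.exp T⌉₊, ?_⟩
  intro p hp n hn
  have hp3 : 3 ≤ p := le_trans (le_max_left _ _) hp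
  have hp0 : (0:ℝ) < p := by positivity
  have hpc : Real.exp T ≤ (p:ℝ) := by
    have h1 : (⌈Real.exp T⌉₊ : ℝ) ≤ (p:ℝ) := by
      exact_mod_cast le_trans (le_max_right _ _) hp
    exact le_trans (Nat.le_ceil _) h1
  set q : ℝ := Real.log p with hqdef
  clear_value q
  have hqT : T ≤ q := by
    rw [hqdef]
    exact (Real.le_log_iff_exp_le hp0).mpr hpc
  clear_value T
  rw [hTdef] at hqT
  simp only [max_le_iff] at hqT
  obtain ⟨hq1, hq2, hq3, hq4, hT1, hT2, hT3, hT4⟩ := hqT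
  have hq0 : (0:ℝ) < q := by linarith only [hq1]
  -- geometry of n
  have hn2 : (2:ℝ) ≤ (n:ℝ) := by exact_mod_cast hn
  simp only [cCorr, aConst, bConst]
  set ν : ℝ := (n:ℝ) - 1 with hνdef
  clear_value ν
  have hν1 : (1:ℝ) ≤ ν := by rw [hνdef]; linarith only [hn2]
  have hν0 : (0:ℝ) < ν := by linarith only [hν1]
  set m : ℝ := ν/2 with hmdef
  clear_value m
  have hm12 : (1:ℝ)/2 ≤ m := by rw [hmdef]; linarith only [hν1]
  have hm0 : (0:ℝ) < m := by linarith only [hm12]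
  set r : ℝ := 2/ν with hrdef
  clear_value r
  have hr0 : (0:ℝ) < r := by rw [hrdef]; exact div_pos two_pos hν0
  have hrm : r = 1/m := by rw [hrdef, hmdef]; rw [one_div, eq_comm, inv_eq_iff_eq_inv, inv_div]
  set x : ℝ := r * q with hxdef
  clear_value x
  have hx0 : (0:ℝ) < x := by rw [hxdef]; exact mul_pos hr0 hq0
  -- rewrite the power of p
  have hT' : (p:ℝ) ^ (-2/ν) = Real.exp (-x) := by
    rw [Real.rpow_def_of_pos hp0]
    congr 1
    rw [hxdef, hrdef, ← hqdef]
    ring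
  rw [hT']
  set t : ℝ := Real.exp (-x) with hteq
  clear_value t
  have ht0 : 0 < t := by rw [hteq]; exact Real.exp_pos _
  have ht1 : t < 1 := by rw [hteq]; exact Real.exp_lt_one_iff.mpr (by linarith only [hx0])
  have h1t : 0 < 1 - t := by linarith only [ht1]
  have hxt : x * t ≤ 1 - t := by rw [hteq]; exact mul_exp_neg_le_one_sub' hx0
  have h1tx : 1 - t ≤ x := by rw [hteq]; exact one_sub_exp_neg_le' hx0
  have hlog1t : Real.log (1-t) ≤ 0 := by rw [hteq]; exact neg_log_one_sub_exp_nonneg' hx0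
  have hxl : x * (-Real.log (1-t)) ≤ 1 := by rw [hteq]; exact x_mul_neg_log' x hx0
  obtain ⟨hK0, hKabs⟩ := logK_bound m hm12
  set K : ℝ := m * betaFun (1/2) m with hKdef
  clear_value K
  -- rewrite cCorr as an exponential
  set L : ℝ := Real.log K + Real.log (1-t)/2 with hLdef
  clear_value L
  have hcc : (K * Real.sqrt (1 - t)) ^ r = Real.exp (r * L) := by
    rw [Real.rpow_def_of_pos (mul_pos hK0 (Real.sqrt_pos.mpr h1t)),
      Real.log_mul (ne_of_gt hK0) (ne_of_gt (Real.sqrt_pos.mpr h1t)),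
      Real.log_sqrt h1t.le, hLdef, mul_comm]
  rw [hcc]
  set c : ℝ := Real.exp (r * L) with hcdef
  clear_value c
  have hc0 : 0 < c := by rw [hcdef]; exact Real.exp_pos _
  -- bound on c
  have hrlogK : r * Real.log K ≤ 3 := by
    have h1 : Real.log K ≤ Real.log m/2 + 1 := by
      linarith only [(abs_le.mp hKabs).2]
    have h2 : Real.log m ≤ m :=
      le_trans (Real.log_le_sub_one_of_pos hm0) (by linarith only [])
    have h3 : r * Real.log K ≤ r * (Real.log m/2 + 1) :=
      mul_le_mul_of_nonneg_left h1 hr0.le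
    have h4 : r * (Real.log m/2 + 1) ≤ 3 := by
      rw [hrm, div_mul_eq_mul_div, div_le_iff₀ hm0]
      linarith only [h2, hm12]
    linarith only [h3, h4]
  have hc21 : c ≤ 21 := by
    have hrL3 : r * L ≤ 3 := by
      rw [hLdef, mul_add]
      have h5 : r * (Real.log (1-t)/2) ≤ 0 :=
        mul_nonpos_of_nonneg_of_nonpos hr0.le (by linarith only [hlog1t])
      linarith only [h5, hrlogK]
    calc c = Real.exp (r*L) := hcdef
      _ ≤ Real.exp 3 := Real.exp_le_exp.mpr hrL3
      _ ≤ 21 := exp_three_le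
  -- ===== part (i) =====
  have part1 : |c / K ^ r - 1| < ε := by
    have hKr : K ^ r = Real.exp (r * Real.log K) := by
      rw [Real.rpow_def_of_pos hK0, mul_comm]
    have hratio : c / K ^ r = Real.exp (r * (Real.log (1-t)/2)) := by
      rw [hcdef, hKr, ← Real.exp_sub]
      congr 1
      rw [hLdef]; ring
    set u : ℝ := r * (Real.log (1-t)/2) with hudef
    clear_value u
    have hu0 : u ≤ 0 := by
      rw [hudef]
      exact mul_nonpos_of_nonneg_of_nonpos hr0.le (by linarith only [hlog1t])
    have hexpu1 : Real.exp u ≤ 1 := Real.exp_le_one_iff.mpr hu0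
    have hb1 : |Real.exp u - 1| ≤ -u := by
      rw [abs_of_nonpos (by linarith only [hexpu1])]
      linarith only [Real.add_one_le_exp u]
    have hb2 : -u = x * (-Real.log (1-t)) / (2*q) := by
      rw [hudef, hxdef]
      field_simp
    have hb3 : -u ≤ 1/(2*q) := by
      rw [hb2]
      exact (div_le_div_iff_of_pos_right (by linarith only [hq0])).mpr hxl
    have hb4 : 1/(2*q) < ε := by
      rw [div_lt_iff₀ (by linarith only [hq0])]
      rw [div_le_iff₀ hε] at hq2
      linarith only [hq2, mul_pos hε hq0]
    rw [hratio]
    calc |Real.exp u - 1| ≤ -u := hb1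
      _ ≤ 1/(2*q) := hb3
      _ < ε := hb4
  -- ===== part (ii) =====
  have hxt1 : x * t ≤ 1 := by linarith only [hxt, ht0]
  have part2 : |r * t * c| < ε := by
    have hbb : r * t * c = (x*t)*c/q := by
      rw [hxdef]; field_simp
    have h21q : (x*t)*c/q ≤ 21/q := by
      apply (div_le_div_iff_of_pos_right hq0).mpr
      calc (x*t)*c ≤ 1*c := mul_le_mul_of_nonneg_right hxt1 hc0.le
        _ ≤ 21 := by rw [one_mul]; exact hc21
    have hfin : 21/q < ε := by
      rw [div_lt_iff₀ hq0]
      rw [div_le_iff₀ hε] at hq3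
      linarith only [hq3, mul_pos hε hq0]
    rw [abs_of_nonneg (le_of_lt (mul_pos (mul_pos hr0 ht0) hc0)), hbb]
    exact lt_of_le_of_lt h21q hfin
  -- ===== part (iii) =====
  have heq3 : (1 - t*c)/(1-t) - 1 = t*(1-c)/(1-t) := by
    rw [div_sub_one h1t.ne']
    congr 1
    ring
  have hmain : t*|1-c|/(1-t) ≤ ε'/2 := by
    rcases le_or_gt x X with hxX | hxX
    · -- small x : use the logarithmic estimate
      have hlogq : 0 ≤ Real.log q := Real.log_nonneg hq1
      have hmqx : m = q / x := by
        rw [hxdef, hrm]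
        field_simp
      have hlogm : Real.log m = Real.log q - Real.log x := by
        rw [hmqx, Real.log_div (ne_of_gt hq0) (ne_of_gt hx0)]
      have hup' : Real.log (1-t) ≤ Real.log x :=
        Real.log_le_log h1t (by linarith only [h1tx])
      have hlow' : Real.log x - x ≤ Real.log (1-t) := by
        have h1 : Real.log (x*t) ≤ Real.log (1-t) :=
          Real.log_le_log (mul_pos hx0 ht0) hxt
        have hlogt : Real.log t = -x := by rw [hteq, Real.log_exp]
        rw [Real.log_mul (ne_of_gt hx0) (ne_of_gt ht0), hlogt] at h1
        linarith only [h1]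
      have hLabs : |L| ≤ 1 + Real.log q/2 + x/2 := by
        have hLsplit : L = (Real.log K - Real.log m/2)
            + (Real.log q + (Real.log (1-t) - Real.log x))/2 := by
          rw [hLdef, hlogm]; ring
        rw [hLsplit]
        refine le_trans (abs_add_le _ _) ?_
        have h2 : |(Real.log q + (Real.log (1-t) - Real.log x))/2| ≤ (Real.log q + x)/2 := by
          rw [abs_le]
          constructor
          · linarith only [hlow', hlogq]
          · linarith only [hup', hlogq, hx0]
        linarith only [hKabs, h2]
      have hΛ : |L| ≤ 1 + Real.log q/2 + X/2 := by linarith only [hLabs, hxX]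
      have hΛ0 : (0:ℝ) ≤ 1 + Real.log q/2 + X/2 := by linarith only [hlogq, hX0]
      have hd1 : X * (1 + Real.log q/2 + X/2) ≤ q := by
        have h := aux_linlog (X + X^2/2) (X/2) 1 q (by linarith only [hX0]) one_pos hq1 hT1 hT2
        linarith only [h]
      have hd2 : Real.exp 1 * (1 + Real.log q/2 + X/2) ≤ ε'/2 * q := by
        have h := aux_linlog (Real.exp 1*(1+X/2)) (Real.exp 1/2) (ε'/2) q
          (by positivity) (by linarith only [hε'pos]) hq1 hT3 hT4
        linarith only [h]
      have hrLabs : |r * L| ≤ 1 := by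
        rw [abs_mul, abs_of_pos hr0]
        have h1 : r * |L| ≤ r * (1 + Real.log q/2 + X/2) :=
          mul_le_mul_of_nonneg_left hΛ hr0.le
        have h2 : r * (1 + Real.log q/2 + X/2) ≤ X * (1 + Real.log q/2 + X/2) / q := by
          have hrq : r = x/q := by rw [hxdef]; field_simp
          rw [hrq, div_mul_eq_mul_div, div_le_div_iff₀ hq0 hq0]
          have key : 0 ≤ (X - x) * (1 + Real.log q/2 + X/2) * q :=
            mul_nonneg (mul_nonneg (by linarith only [hxX]) hΛ0) hq0.le
          linarith only [key]
        have h3 : X * (1 + Real.log q/2 + X/2) / q ≤ 1 := by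
          rw [div_le_one hq0]; exact hd1
        linarith only [h1, h2, h3]
      have h1c : |1 - c| ≤ |r*L| * Real.exp 1 := by
        rw [abs_sub_comm]
        calc |c - 1| = |Real.exp (r*L) - 1| := by rw [hcdef]
          _ ≤ |r*L| * Real.exp |r*L| := abs_exp_sub_one_le' _
          _ ≤ |r*L| * Real.exp 1 :=
              mul_le_mul_of_nonneg_left (Real.exp_le_exp.mpr hrLabs) (abs_nonneg _)
      have hstep1 : t*|1-c|/(1-t) ≤ |1-c|/x := by
        rw [div_le_div_iff₀ h1t hx0]
        have key := mul_le_mul_of_nonneg_left hxt (abs_nonneg (1-c))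
        linarith only [key]
      have hstep2 : |1-c|/x ≤ Real.exp 1 * |L| / q := by
        have hrLx : |r*L| = x * |L| / q := by
          rw [abs_mul, abs_of_pos hr0, hxdef]
          field_simp
        rw [hrLx] at h1c
        have h9 : |1-c| ≤ x * (Real.exp 1 * |L| / q) := by
          calc |1-c| ≤ x*|L|/q*Real.exp 1 := h1c
            _ = x * (Real.exp 1 * |L| / q) := by ring
        rw [div_le_iff₀ hx0]
        calc |1-c| ≤ x * (Real.exp 1 * |L| / q) := h9
          _ = Real.exp 1 * |L| / q * x := by ring
      have hstep3 : Real.exp 1 * |L| / q ≤ ε'/2 := by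
        rw [div_le_iff₀ hq0]
        calc Real.exp 1 * |L| ≤ Real.exp 1 * (1 + Real.log q/2 + X/2) :=
            mul_le_mul_of_nonneg_left hΛ (Real.exp_pos 1).le
          _ ≤ ε'/2 * q := hd2
      linarith only [hstep1, hstep2, hstep3]
    · -- large x : t is very small
      have hc22 : |1 - c| ≤ 22 := by
        rw [abs_le]
        constructor
        · linarith only [hc21]
        · linarith only [hc0]
      have ht' : t ≤ ε'/(ε'+44) := by
        have h1 : t ≤ Real.exp (-X) := by
          rw [hteq]
          exact Real.exp_le_exp.mpr (by linarith only [hxX])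
        have h2 : Real.exp (-X) = ε'/(ε'+44) := by
          rw [Real.exp_neg, hEX]
          rw [inv_eq_one_div, div_eq_div_iff (by positivity)
            (by linarith only [hε'pos] : (0:ℝ) < ε'+44).ne']
          field_simp
        linarith only [h1, h2.le]
      have h44 : 44 * t ≤ ε' * (1-t) := by
        rw [le_div_iff₀ (by linarith only [hε'pos] : (0:ℝ) < ε'+44)] at ht'
        linarith only [ht']
      have hA : t*|1-c|/(1-t) ≤ t*22/(1-t) :=
        (div_le_div_iff_of_pos_right h1t).mpr (mul_le_mul_of_nonneg_left hc22 ht0.le)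
      have hB : t*22/(1-t) ≤ ε'/2 := by
        rw [div_le_iff₀ h1t]
        linarith only [h44]
      linarith only [hA, hB]
  have habs3 : |(1 - t*c)/(1-t) - 1| ≤ ε'/2 := by
    rw [heq3, abs_div, abs_of_pos h1t, abs_mul, abs_of_pos ht0]
    exact hmain
  have part3 : |(1 - t*c)/(1-t) - 1| < ε :=
    lt_of_le_of_lt habs3 (by linarith only [hε'pos, hε'le])
  -- ===== part (iv) =====
  have ha34 : 3/4*(1-t) ≤ 1 - t*c := by
    have h1 := (abs_le.mp habs3).1
    have h2 : 3/4 ≤ (1 - t*c)/(1-t) := by linarith only [h1, hε'half]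
    calc 3/4*(1-t) ≤ ((1 - t*c)/(1-t))*(1-t) :=
        mul_le_mul_of_nonneg_right h2 h1t.le
      _ = 1 - t*c := div_mul_cancel₀ _ h1t.ne'
  have ha0 : 0 < 1 - t*c := lt_of_lt_of_le (by linarith only [h1t]) ha34
  have part4 : |r * t * c / (1 - t*c)| < ε := by
    rw [abs_of_nonneg (div_nonneg (le_of_lt (mul_pos (mul_pos hr0 ht0) hc0)) ha0.le)]
    have hb : r*t*c/(1 - t*c) ≤ r*t*c/(3/4*(1-t)) := by
      gcongr
    have heq4 : r*t*c/(3/4*(1-t)) = 4/3*(c/q)*((x*t)/(1-t)) := by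
      rw [hxdef]; field_simp
    have hc' : c/q ≤ 21/q := (div_le_div_iff_of_pos_right hq0).mpr hc21
    have hx' : x*t/(1-t) ≤ 1 := (div_le_one h1t).mpr hxt
    have hprod : 4/3*(c/q)*((x*t)/(1-t)) ≤ 4/3*(21/q)*1 := by
      have s1 : 4/3*(c/q) ≤ 4/3*(21/q) := by linarith only [hc']
      refine mul_le_mul s1 hx' ?_ ?_
      · exact le_of_lt (div_pos (mul_pos hx0 ht0) h1t)
      · positivity
    have hfin : 4/3*(21/q)*1 < ε := by
      rw [mul_one, show (4:ℝ)/3*(21/q) = 28/q by ring, div_lt_iff₀ hq0]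
      rw [div_le_iff₀ hε] at hq4
      linarith only [hq4, mul_pos hε hq0]
    calc r*t*c/(1 - t*c) ≤ r*t*c/(3/4*(1-t)) := hb
      _ = 4/3*(c/q)*((x*t)/(1-t)) := heq4
      _ ≤ 4/3*(21/q)*1 := hprod
      _ < ε := hfin
  exact ⟨part1, part2, part3, part4⟩
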